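/- Let Ĝ be a finite connected simple graph with edge set E(Ĝ) = {e0, e1, ..., e_m}, let u, v be the endpoints of e0, and let G = Ĝ − e0 (assumed connected, with u ≠ v), with Kirchhoff polynomial ψ_G and second Symanzik polynomial φ_G with respect to u, v. Then, as an identity in [0,∞] of Lebesgue integrals, ∫_{(0,∞)^m} ψ_Ĝ(α_{e0}, α_{e1},...,α_{e_{m-1}}, 1)^{-2} dα_{e0} dα_{e1} ... dα_{e_{m-1}} = ∫_{(0,∞)^{m-1}} [ψ_G(α_{e1},...,α_{e_{m-1}},1) · φ_G(α_{e1},...,α_{e_{m-1}},1)]^{-1} dα_{e1} ... dα_{e_{m-1}}; that is, the period of the glued vacuum graph Ĝ equals the integral of 1/(ψ_G φ_G) over the affine chart α_{e_m}=1. -/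

import Mathlib

open MeasureTheory SimpleGraph Finset

noncomputable section

open Classical in
/-- The Kirchhoff (first Symanzik) polynomial of `G`, as a real-valued function of an
assignment `α` of values to the (potential) edges: `ψ_G(α) = ∑_T ∏_{e ∉ T} α e`,
the sum over all spanning trees `T` of `G`. -/
def psiFun {V : Type} [Fintype V] [DecidableEq V] (G : SimpleGraph V) (α : Sym2 V → ℝ) : ℝ :=
  ∑ T ∈ (Set.toFinite G.edgeSet).toFinset.powerset,
    if (SimpleGraph.fromEdgeSet (↑T : Set (Sym2 V))).IsTree then
      ∏ e ∈ (Set.toFinite G.edgeSet).toFinset \ T, α e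
    else 0

open Classical in
/-- The second Symanzik polynomial of `G` with marked vertices `u`, `v`, as a
real-valued function: `φ_G(α) = ∑_F ∏_{e ∉ F} α e`, the sum over all spanning
2-forests `F` (acyclic spanning subgraphs with exactly two connected components)
of `G` separating `u` from `v`. -/
def phiFun {V : Type} [Fintype V] [DecidableEq V] (G : SimpleGraph V) (u v : V) (α : Sym2 V → ℝ) : ℝ :=
  ∑ T ∈ (Set.toFinite G.edgeSet).toFinset.powerset,
    if ((SimpleGraph.fromEdgeSet (↑T : Set (Sym2 V))).IsAcyclic ∧
        Nat.card (SimpleGraph.fromEdgeSet (↑T : Set (Sym2 V))).ConnectedComponent = 2 ∧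
        ¬ (SimpleGraph.fromEdgeSet (↑T : Set (Sym2 V))).Reachable u v) then
      ∏ e ∈ (Set.toFinite G.edgeSet).toFinset \ T, α e
    else 0

section Aux

set_option linter.unusedSectionVars false

variable {V : Type} [Fintype V] [DecidableEq V]

lemma aux_reach_sup (H : SimpleGraph V) (u v x y : V)
    (h : (H ⊔ edge u v).Reachable x y) :
    H.Reachable x y ∨ (H.Reachable x u ∧ H.Reachable v y) ∨
      (H.Reachable x v ∧ H.Reachable u y) := by
  obtain ⟨p⟩ := h
  induction p with
  | nil => exact Or.inl (Reachable.refl _)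
  | @cons a b c hab q ih =>
    rcases hab with hab | hab
    · have h1 : H.Reachable a b := hab.reachable
      rcases ih with h2 | ⟨h2, h3⟩ | ⟨h2, h3⟩
      · exact Or.inl (h1.trans h2)
      · exact Or.inr (Or.inl ⟨h1.trans h2, h3⟩)
      · exact Or.inr (Or.inr ⟨h1.trans h2, h3⟩)
    · rw [edge_adj] at hab
      rcases hab.1 with ⟨rfl, rfl⟩ | ⟨rfl, rfl⟩
      · rcases ih with h2 | ⟨h2, h3⟩ | ⟨h2, h3⟩
        · exact Or.inr (Or.inl ⟨Reachable.refl _, h2⟩)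
        · exact Or.inr (Or.inl ⟨Reachable.refl _, h3⟩)
        · exact Or.inl h3
      · rcases ih with h2 | ⟨h2, h3⟩ | ⟨h2, h3⟩
        · exact Or.inr (Or.inr ⟨Reachable.refl _, h2⟩)
        · exact Or.inl h3
        · exact Or.inl (h2.symm.trans h3)

lemma card_two_elim {α : Type*} (h : Nat.card α = 2) {a b : α} (hab : a ≠ b) (c : α) :
    c = a ∨ c = b := by
  obtain ⟨x, y, hxy, hu⟩ := Nat.card_eq_two_iff.mp h
  have hm : ∀ z : α, z = x ∨ z = y := by
    intro z
    have : z ∈ ({x, y} : Set α) := hu ▸ Set.mem_univ z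
    simpa using this
  rcases hm a with rfl | rfl <;> rcases hm b with rfl | rfl <;>
    rcases hm c with rfl | rfl <;> tauto

lemma sup_edge_sdiff (H : SimpleGraph V) {u v : V} (hne : ¬ H.Adj u v) :
    (H ⊔ edge u v) \ fromEdgeSet {s(u, v)} = H := by
  ext a b
  simp only [sdiff_adj, sup_adj, edge_adj, fromEdgeSet_adj, Set.mem_singleton_iff]
  constructor
  · rintro ⟨hH | ⟨h1, h2⟩, hnot⟩
    · exact hH
    · exact absurd ⟨by rcases h1 with ⟨rfl, rfl⟩ | ⟨rfl, rfl⟩ <;> simp [Sym2.eq_swap], h2⟩ hnot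
  · intro h
    refine ⟨Or.inl h, ?_⟩
    rintro ⟨he, hne'⟩
    rw [Sym2.eq_iff] at he
    rcases he with ⟨rfl, rfl⟩ | ⟨rfl, rfl⟩
    · exact hne h
    · exact hne h.symm

lemma sup_edge_isTree_iff (H : SimpleGraph V) {u v : V} (huv : u ≠ v) (hne : ¬ H.Adj u v) :
    (H ⊔ edge u v).IsTree ↔
      H.IsAcyclic ∧ Nat.card H.ConnectedComponent = 2 ∧ ¬ H.Reachable u v := by
  have hadj : (H ⊔ edge u v).Adj u v := Or.inr (by rw [edge_adj]; exact ⟨Or.inl ⟨rfl, rfl⟩, huv⟩)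
  constructor
  · rintro ⟨hconn, hac⟩
    have hnr : ¬ H.Reachable u v := by
      intro hr
      have : ∃ (w : V) (p : (H ⊔ edge u v).Walk w w), p.IsCycle ∧ s(u, v) ∈ p.edges := by
        rw [← adj_and_reachable_delete_edges_iff_exists_cycle]
        exact ⟨hadj, by show ((H ⊔ edge u v) \ fromEdgeSet {s(u, v)}).Reachable u v; rw [sup_edge_sdiff H hne]; exact hr⟩
      obtain ⟨w, p, hp, -⟩ := this
      exact hac p hp
    have hHac : H.IsAcyclic := by
      intro w c hc
      have hce : ∀ e ∈ c.edges, e ∈ (H ⊔ edge u v).edgeSet := fun e he =>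
        edgeSet_mono le_sup_left (c.edges_subset_edgeSet he)
      exact hac (c.transfer _ hce) (hc.transfer hce)
    refine ⟨hHac, ?_, hnr⟩
    · rw [Nat.card_eq_two_iff]
      refine ⟨H.connectedComponentMk u, H.connectedComponentMk v, ?_, ?_⟩
      · simp only [ne_eq, ConnectedComponent.eq]
        exact hnr
      · rw [Set.eq_univ_iff_forall]
        intro c
        induction c using ConnectedComponent.ind with
        | _ x =>
          rcases aux_reach_sup H u v x u (hconn.preconnected x u) with h | ⟨h, h'⟩ | ⟨h, h'⟩
          · exact Or.inl (ConnectedComponent.eq.mpr h)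
          · exact Or.inl (ConnectedComponent.eq.mpr h)
          · exact Or.inr (ConnectedComponent.eq.mpr h)
  · rintro ⟨hac, hcard, hnr⟩
    have hcc : (H.connectedComponentMk u) ≠ (H.connectedComponentMk v) := by
      simp only [ne_eq, ConnectedComponent.eq]; exact hnr
    have hall : ∀ x : V, H.Reachable x u ∨ H.Reachable x v := by
      intro x
      rcases card_two_elim hcard hcc (H.connectedComponentMk x) with h | h
      · exact Or.inl (ConnectedComponent.eq.mp h)
      · exact Or.inr (ConnectedComponent.eq.mp h)
    constructor
    · rw [connected_iff]
      refine ⟨?_, ⟨u⟩⟩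
      intro x y
      have hx : ∀ z : V, (H ⊔ edge u v).Reachable z u := by
        intro z
        rcases hall z with h | h
        · exact h.mono le_sup_left
        · exact (h.mono le_sup_left).trans hadj.symm.reachable
      exact (hx x).trans (hx y).symm
    · intro w c hc
      by_cases he : s(u, v) ∈ c.edges
      · have : (H ⊔ edge u v).Adj u v ∧
            ((H ⊔ edge u v) \ fromEdgeSet {s(u, v)}).Reachable u v :=
          adj_and_reachable_delete_edges_iff_exists_cycle.mpr ⟨w, c, hc, he⟩
        rw [sup_edge_sdiff H hne] at this
        exact hnr this.2
      · have hce : ∀ e ∈ c.edges, e ∈ H.edgeSet := by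
          intro e hee
          have := c.edges_subset_edgeSet hee
          rw [edgeSet_sup, edge_edgeSet_of_ne huv] at this
          rcases this with h | h
          · exact h
          · exact absurd (by simpa using h) (by rintro rfl; exact he hee)
        exact hac (c.transfer _ hce) (hc.transfer hce)

lemma reachable_of_delete (G : SimpleGraph V) {a b : V}
    (hab : (G \ fromEdgeSet {s(a, b)}).Reachable a b) {x y : V} (h : G.Reachable x y) :
    (G \ fromEdgeSet {s(a, b)}).Reachable x y := by
  obtain ⟨p⟩ := h
  induction p with
  | nil => exact Reachable.refl _
  | @cons c d e hcd q ih =>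
    refine Reachable.trans ?_ ih
    by_cases hsd : s(c, d) = s(a, b)
    · rw [Sym2.eq_iff] at hsd
      rcases hsd with ⟨rfl, rfl⟩ | ⟨rfl, rfl⟩
      · exact hab
      · exact hab.symm
    · exact Adj.reachable (by simp only [sdiff_adj, fromEdgeSet_adj]; exact ⟨hcd, by tauto⟩)

lemma exists_spanning_tree' : ∀ (n : ℕ) (G : SimpleGraph V),
    (Set.toFinite G.edgeSet).toFinset.card = n → G.Connected → ∃ T, T ≤ G ∧ T.IsTree := by
  intro n
  induction n using Nat.strong_induction_on with
  | _ n ih =>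
    intro G hn hc
    by_cases hac : G.IsAcyclic
    · exact ⟨G, le_rfl, hc, hac⟩
    · simp only [IsAcyclic, not_forall, not_not] at hac
      obtain ⟨w, c, hcyc⟩ := hac
      cases c with
      | nil => exact absurd hcyc (by simp [Walk.IsCycle])
      | @cons _ d _ hwd q =>
        have he : s(w, d) ∈ (Walk.cons hwd q).edges := by simp
        have hreach : (G \ fromEdgeSet {s(w, d)}).Reachable w d :=
          (adj_and_reachable_delete_edges_iff_exists_cycle.mpr ⟨w, _, hcyc, he⟩).2
        set G' := G \ fromEdgeSet {s(w, d)} with hG'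
        have hc' : G'.Connected := by
          rw [connected_iff]
          exact ⟨fun x y => reachable_of_delete G hreach (hc.preconnected x y), hc.nonempty⟩
        have hes : G'.edgeSet = G.edgeSet \ {s(w, d)} := by
          rw [hG', ← deleteEdges, edgeSet_deleteEdges]
        have hmem : s(w, d) ∈ G.edgeSet := hwd
        have hcard : (Set.toFinite G'.edgeSet).toFinset.card < n := by
          have h1 : (Set.toFinite G'.edgeSet).toFinset =
              (Set.toFinite G.edgeSet).toFinset.erase s(w, d) := by
            ext e
            simp [hes]
            tauto
          rw [h1, ← hn]
          exact Finset.card_erase_lt_of_mem (by simpa using hmem)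
        obtain ⟨T, hT, hTt⟩ := ih _ hcard G' rfl hc'
        exact ⟨T, hT.trans sdiff_le, hTt⟩

lemma exists_spanning_tree (G : SimpleGraph V) (hc : G.Connected) : ∃ T, T ≤ G ∧ T.IsTree :=
  exists_spanning_tree' _ G rfl hc

lemma fromEdgeSet_sdiff_eq (G : SimpleGraph V) (s : Set (Sym2 V)) :
    fromEdgeSet (G.edgeSet \ s) = G \ fromEdgeSet s := by
  ext a b
  simp only [fromEdgeSet_adj, Set.mem_diff, sdiff_adj, mem_edgeSet]
  constructor
  · rintro ⟨⟨h1, h2⟩, h3⟩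
    exact ⟨h1, fun h => h2 h.1⟩
  · rintro ⟨h1, h2⟩
    exact ⟨⟨h1, fun h => h2 ⟨h, h1.ne⟩⟩, h1.ne⟩

lemma exists_two_forest (G : SimpleGraph V) (hc : G.Connected) {u v : V} (huv : u ≠ v) :
    ∃ F : Finset (Sym2 V), ↑F ⊆ G.edgeSet ∧ (fromEdgeSet (↑F : Set (Sym2 V))).IsAcyclic ∧
      Nat.card (fromEdgeSet (↑F : Set (Sym2 V))).ConnectedComponent = 2 ∧
      ¬ (fromEdgeSet (↑F : Set (Sym2 V))).Reachable u v := by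
  obtain ⟨T, hTle, hTt⟩ := exists_spanning_tree G hc
  obtain ⟨p0⟩ := hTt.isConnected.preconnected u v
  obtain ⟨p, hp⟩ := p0.toPath
  cases p with
  | nil => exact absurd rfl huv
  | @cons _ x _ hux q =>
    rw [Walk.cons_isPath_iff] at hp
    have hqe : s(u, x) ∉ q.edges := fun h => hp.2 (Walk.fst_mem_support_of_mem_edges q h)
    refine ⟨(Set.toFinite T.edgeSet).toFinset.erase s(u, x), ?_, ?_⟩
    · intro e he
      simp only [Finset.coe_erase, Set.mem_diff, Set.Finite.coe_toFinset] at he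
      exact edgeSet_mono hTle he.1
    · have hFcoe : ((((Set.toFinite T.edgeSet).toFinset.erase s(u, x)) : Finset (Sym2 V)) :
          Set (Sym2 V)) = T.edgeSet \ {s(u, x)} := by
        ext e
        simp [and_comm]
      rw [hFcoe, fromEdgeSet_sdiff_eq]
      set H := T \ fromEdgeSet {s(u, x)} with hH
      have hHne : ¬ H.Adj u x := by
        simp only [hH, sdiff_adj, fromEdgeSet_adj]
        rintro ⟨h1, h2⟩
        exact h2 ⟨rfl, h1.ne⟩
      have hsup : H ⊔ edge u x = T := by
        have hsub : T.edgeSet ∪ {s(u, x)} = T.edgeSet :=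
          Set.union_eq_self_of_subset_right (Set.singleton_subset_iff.mpr hux)
        rw [hH, edge, ← fromEdgeSet_sdiff_eq, ← fromEdgeSet_union,
          Set.diff_union_self, hsub, fromEdgeSet_edgeSet]
      have hiff := (sup_edge_isTree_iff H hux.ne hHne).mp (by rw [hsup]; exact hTt)
      have hxv : H.Reachable x v := by
        refine ⟨q.toDeleteEdges {s(u, x)} ?_⟩
        intro e he
        simp only [Set.mem_singleton_iff]
        rintro rfl
        exact hqe he
      exact ⟨hiff.1, hiff.2.1, fun h => hiff.2.2 (h.trans hxv.symm)⟩

lemma psiFun_congr (G : SimpleGraph V) {α β : Sym2 V → ℝ}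
    (h : ∀ e ∈ G.edgeSet, α e = β e) : psiFun G α = psiFun G β := by
  unfold psiFun
  refine Finset.sum_congr rfl fun T hT => ?_
  split
  · refine Finset.prod_congr rfl fun e he => h e ?_
    have := (Finset.mem_sdiff.mp he).1
    simpa using this
  · rfl

lemma phiFun_congr (G : SimpleGraph V) (u v : V) {α β : Sym2 V → ℝ}
    (h : ∀ e ∈ G.edgeSet, α e = β e) : phiFun G u v α = phiFun G u v β := by
  unfold phiFun
  refine Finset.sum_congr rfl fun T hT => ?_
  split
  · refine Finset.prod_congr rfl fun e he => h e ?_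
    have := (Finset.mem_sdiff.mp he).1
    simpa using this
  · rfl

lemma psiFun_pos (G : SimpleGraph V) (hc : G.Connected) {α : Sym2 V → ℝ}
    (hα : ∀ e ∈ G.edgeSet, 0 < α e) : 0 < psiFun G α := by
  classical
  obtain ⟨T, hTle, hTt⟩ := exists_spanning_tree G hc
  unfold psiFun
  have hmem : (Set.toFinite T.edgeSet).toFinset ∈
      (Set.toFinite G.edgeSet).toFinset.powerset := by
    simp only [Finset.mem_powerset]
    intro e he
    simp only [Set.Finite.mem_toFinset] at he ⊢
    exact edgeSet_mono hTle he
  refine Finset.sum_pos' (fun S hS => ?_) ⟨_, hmem, ?_⟩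
  · split
    · exact Finset.prod_nonneg fun e he =>
        (hα e (by simpa using (Finset.mem_sdiff.mp he).1)).le
    · exact le_rfl
  · rw [if_pos (by rw [Set.Finite.coe_toFinset, fromEdgeSet_edgeSet]; exact hTt)]
    exact Finset.prod_pos fun e he => hα e (by simpa using (Finset.mem_sdiff.mp he).1)

lemma phiFun_pos (G : SimpleGraph V) (hc : G.Connected) {u v : V} (huv : u ≠ v)
    {α : Sym2 V → ℝ} (hα : ∀ e ∈ G.edgeSet, 0 < α e) : 0 < phiFun G u v α := by
  classical
  obtain ⟨F, hFle, h1, h2, h3⟩ := exists_two_forest G hc huv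
  unfold phiFun
  have hmem : F ∈ (Set.toFinite G.edgeSet).toFinset.powerset := by
    simp only [Finset.mem_powerset]
    intro e he
    simp only [Set.Finite.mem_toFinset]
    exact hFle he
  refine Finset.sum_pos' (fun S hS => ?_) ⟨F, hmem, ?_⟩
  · split
    · exact Finset.prod_nonneg fun e he =>
        (hα e (by simpa using (Finset.mem_sdiff.mp he).1)).le
    · exact le_rfl
  · rw [if_pos ⟨h1, h2, h3⟩]
    exact Finset.prod_pos fun e he => hα e (by simpa using (Finset.mem_sdiff.mp he).1)

open Classical in
lemma psi_split (Ghat G : SimpleGraph V) (u v : V) (huv : u ≠ v)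
    (he0 : s(u, v) ∈ Ghat.edgeSet) (hG : G = Ghat.deleteEdges {s(u, v)}) (α : Sym2 V → ℝ) :
    psiFun Ghat α = α s(u, v) * psiFun G α + phiFun G u v α := by
  have hGedge : G.edgeSet = Ghat.edgeSet \ {s(u, v)} := by rw [hG, edgeSet_deleteEdges]
  set e0 := s(u, v) with he0def
  set E' := (Set.toFinite G.edgeSet).toFinset with hE'
  have he0E' : e0 ∉ E' := by
    rw [hE', Set.Finite.mem_toFinset, hGedge]
    exact fun h => h.2 rfl
  have hE : (Set.toFinite Ghat.edgeSet).toFinset = insert e0 E' := by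
    ext e
    simp only [Set.Finite.mem_toFinset, Finset.mem_insert, hE', hGedge, Set.mem_diff,
      Set.mem_singleton_iff]
    constructor
    · intro h
      by_cases hee : e = e0
      · exact Or.inl hee
      · exact Or.inr ⟨h, hee⟩
    · rintro (rfl | ⟨h, -⟩)
      · exact he0
      · exact h
  unfold psiFun phiFun
  rw [hE, Finset.sum_powerset_insert he0E', Finset.mul_sum]
  congr 1
  · -- trees not containing e0
    refine Finset.sum_congr rfl fun T hT => ?_
    rw [Finset.mem_powerset] at hT
    have he0T : e0 ∉ T := fun h => he0E' (hT h)
    have hset : insert e0 E' \ T = insert e0 (E' \ T) :=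
      Finset.insert_sdiff_of_notMem _ he0T
    rw [hset, Finset.prod_insert (fun h => he0E' (Finset.mem_sdiff.mp h).1)]
    split
    · rfl
    · rw [mul_zero]
  · -- trees containing e0  ↔  2-forests
    refine Finset.sum_congr rfl fun T hT => ?_
    rw [Finset.mem_powerset] at hT
    have he0T : e0 ∉ T := fun h => he0E' (hT h)
    have hne : ¬ (fromEdgeSet (↑T : Set (Sym2 V))).Adj u v := by
      rw [fromEdgeSet_adj]
      rintro ⟨h1, -⟩
      exact he0T h1
    have hgr : fromEdgeSet (↑(insert e0 T) : Set (Sym2 V)) =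
        fromEdgeSet (↑T : Set (Sym2 V)) ⊔ edge u v := by
      rw [Finset.coe_insert, Set.insert_eq, fromEdgeSet_union, sup_comm]
      rfl
    have hiff : (fromEdgeSet (↑(insert e0 T) : Set (Sym2 V))).IsTree ↔
        ((fromEdgeSet (↑T : Set (Sym2 V))).IsAcyclic ∧
          Nat.card (fromEdgeSet (↑T : Set (Sym2 V))).ConnectedComponent = 2 ∧
          ¬ (fromEdgeSet (↑T : Set (Sym2 V))).Reachable u v) := by
      rw [hgr]
      exact sup_edge_isTree_iff _ huv hne
    have hset : insert e0 E' \ insert e0 T = E' \ T := by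
      ext e
      simp only [Finset.mem_sdiff, Finset.mem_insert, not_or]
      constructor
      · rintro ⟨rfl | h1, h2, h3⟩
        · exact absurd rfl h2
        · exact ⟨h1, h3⟩
      · rintro ⟨h1, h2⟩
        exact ⟨Or.inr h1, fun h => he0E' (h ▸ h1), h2⟩
    rw [hset]
    exact if_congr hiff rfl rfl

lemma inner_integral {a b : ℝ} (ha : 0 < a) (hb : 0 < b) :
    ∫⁻ t in Set.Ioi (0 : ℝ), ENNReal.ofReal (((t * a + b) ^ 2)⁻¹)
      = ENNReal.ofReal ((a * b)⁻¹) := by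
  set g : ℝ → ℝ := fun t => -(a⁻¹ * (t * a + b)⁻¹) with hgdef
  set g' : ℝ → ℝ := fun t => ((t * a + b) ^ 2)⁻¹ with hg'def
  have hderiv : ∀ x ∈ Set.Ici (0 : ℝ), HasDerivAt g (g' x) x := by
    intro x hx
    have hpos : 0 < x * a + b := add_pos_of_nonneg_of_pos (mul_nonneg hx ha.le) hb
    have h1 : HasDerivAt (fun t : ℝ => t * a + b) a x := by
      simpa using ((hasDerivAt_id x).mul_const a).add_const b
    have h2 := (h1.inv hpos.ne').const_mul a⁻¹
    have h3 := h2.neg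
    refine h3.congr_deriv ?_
    simp only [hg'def]
    field_simp
  have g'pos : ∀ x ∈ Set.Ioi (0 : ℝ), 0 ≤ g' x := fun x _ => by positivity
  have htend : Filter.Tendsto g Filter.atTop (nhds 0) := by
    have h1 : Filter.Tendsto (fun t : ℝ => t * a + b) Filter.atTop Filter.atTop :=
      Filter.tendsto_atTop_add_const_right _ b (Filter.tendsto_id.atTop_mul_const ha)
    have h2 := h1.inv_tendsto_atTop
    have h3 := (h2.const_mul a⁻¹).neg
    simpa using h3
  have hint : IntegrableOn g' (Set.Ioi (0 : ℝ)) :=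
    integrableOn_Ioi_deriv_of_nonneg' hderiv g'pos htend
  have hval : ∫ x in Set.Ioi (0 : ℝ), g' x = (a * b)⁻¹ := by
    rw [integral_Ioi_of_hasDerivAt_of_nonneg' hderiv g'pos htend]
    simp only [hgdef, zero_mul, zero_add, zero_sub, neg_neg, mul_inv]
  rw [← hval, ← ofReal_integral_eq_lintegral_ofReal hint]
  exact Filter.Eventually.of_forall fun x => by positivity

lemma measurable_psiFun (G : SimpleGraph V) : Measurable (psiFun G) := by
  unfold psiFun
  apply Finset.measurable_sum
  intro T _
  split_ifs
  · exact Finset.measurable_prod _ fun e _ => measurable_pi_apply e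
  · exact measurable_const

lemma measurable_phiFun (G : SimpleGraph V) (u v : V) : Measurable (phiFun G u v) := by
  unfold phiFun
  apply Finset.measurable_sum
  intro T _
  split_ifs
  · exact Finset.measurable_prod _ fun e _ => measurable_pi_apply e
  · exact measurable_const

lemma measurable_snoc {n : ℕ} :
    Measurable fun (z : Fin n → ℝ) => (Fin.snoc z 1 : Fin (n + 1) → ℝ) := by
  apply measurable_pi_lambda
  intro i
  induction i using Fin.lastCases with
  | last => simp only [Fin.snoc_last]; exact measurable_const
  | cast j => simp only [Fin.snoc_castSucc]; exact measurable_pi_apply j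

lemma measurable_extend {n : ℕ} {f : Fin n → Sym2 V} (hf : Function.Injective f) :
    Measurable fun (g : Fin n → ℝ) => Function.extend f g (0 : Sym2 V → ℝ) := by
  apply measurable_pi_lambda
  intro e
  by_cases he : ∃ i, f i = e
  · obtain ⟨i, rfl⟩ := he
    simp only [hf.extend_apply]
    exact measurable_pi_apply i
  · simp only [Function.extend_apply' _ _ _ he]
    exact measurable_const

end Aux

/-- The period of the glued vacuum graph `Ĝ` equals the projective integral of
`1/(ψ_G φ_G)`: if `Ĝ` is connected with edges `e₀, e₁, …, e_{k+1}` (listed by `edh`,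
with glued edge `e₀ = {u, v}`) and `G = Ĝ - e₀` is connected, then, as an identity in
`[0, ∞]`, `∫_{(0,∞)^{k+1}} ψ_Ĝ(α_{e₀}, …, α_{e_k}, 1)^{-2} = ∫_{(0,∞)^k}
(ψ_G φ_G)(α_{e₁}, …, α_{e_k}, 1)^{-1}`. -/
theorem statement2 {V : Type} [Fintype V] [DecidableEq V]
    (Ghat : SimpleGraph V) (hconn : Ghat.Connected)
    (u v : V) (huv : u ≠ v) (he0 : s(u, v) ∈ Ghat.edgeSet)
    (G : SimpleGraph V) (hG : G = Ghat.deleteEdges {s(u, v)}) (hGconn : G.Connected)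
    (k : ℕ) (edh : Fin (k + 2) → Sym2 V) (hinj : Function.Injective edh)
    (hrange : Set.range edh = Ghat.edgeSet) (h0 : edh 0 = s(u, v)) :
    ∫⁻ z : Fin (k + 1) → ℝ in Set.univ.pi fun _ => Set.Ioi 0,
        ENNReal.ofReal ((psiFun Ghat (Function.extend edh (Fin.snoc z 1) 0) ^ 2)⁻¹)
      = ∫⁻ w : Fin k → ℝ in Set.univ.pi fun _ => Set.Ioi 0,
          ENNReal.ofReal
            ((psiFun G (Function.extend (fun i : Fin (k + 1) => edh i.succ) (Fin.snoc w 1) 0) *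
              phiFun G u v
                (Function.extend (fun i : Fin (k + 1) => edh i.succ) (Fin.snoc w 1) 0))⁻¹) := by
  classical
  have hGedge : G.edgeSet = Ghat.edgeSet \ {s(u, v)} := by rw [hG, edgeSet_deleteEdges]
  set f1 : Fin (k + 1) → Sym2 V := fun i => edh i.succ with hf1
  have hinj' : Function.Injective f1 := fun a b h => Fin.succ_injective _ (hinj h)
  have hrange' : ∀ e ∈ G.edgeSet, ∃ i : Fin (k + 1), f1 i = e := by
    intro e he
    rw [hGedge] at he
    obtain ⟨j, rfl⟩ : ∃ j, edh j = e := by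
      have : e ∈ Set.range edh := hrange ▸ he.1
      exact this
    have hj : j ≠ 0 := by
      rintro rfl
      exact he.2 (by rw [h0]; rfl)
    obtain ⟨i, rfl⟩ := Fin.exists_succ_eq_of_ne_zero hj
    exact ⟨i, rfl⟩
  set β : (Fin k → ℝ) → Sym2 V → ℝ := fun w => Function.extend f1 (Fin.snoc w 1) 0 with hβ
  have hβval : ∀ (w : Fin k → ℝ) (i : Fin (k + 1)), β w (f1 i) = (Fin.snoc w 1 : Fin (k + 1) → ℝ) i := by
    intro w i
    rw [hβ]
    exact hinj'.extend_apply _ _ i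
  set av : (Fin k → ℝ) → ℝ := fun w => psiFun G (β w) with hav
  set bv : (Fin k → ℝ) → ℝ := fun w => phiFun G u v (β w) with hbv
  have hβpos : ∀ w ∈ Set.univ.pi (fun _ : Fin k => Set.Ioi (0 : ℝ)),
      ∀ e ∈ G.edgeSet, 0 < β w e := by
    intro w hw e he
    obtain ⟨i, rfl⟩ := hrange' e he
    rw [hβval]
    induction i using Fin.lastCases with
    | last => rw [Fin.snoc_last]; exact one_pos
    | cast j => rw [Fin.snoc_castSucc]; exact hw j (Set.mem_univ j)
  have hapos : ∀ w ∈ Set.univ.pi (fun _ : Fin k => Set.Ioi (0 : ℝ)), 0 < av w :=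
    fun w hw => psiFun_pos G hGconn (hβpos w hw)
  have hbpos : ∀ w ∈ Set.univ.pi (fun _ : Fin k => Set.Ioi (0 : ℝ)), 0 < bv w :=
    fun w hw => phiFun_pos G hGconn huv (hβpos w hw)
  have key : ∀ (t : ℝ) (w : Fin k → ℝ),
      psiFun Ghat (Function.extend edh (Fin.snoc (Fin.insertNth 0 t w) 1) 0)
        = t * av w + bv w := by
    intro t w
    rw [psi_split Ghat G u v huv he0 hG]
    have hB : ∀ e ∈ G.edgeSet,
        Function.extend edh (Fin.snoc (Fin.insertNth 0 t w) 1) 0 e = β w e := by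
      intro e he
      obtain ⟨i, rfl⟩ := hrange' e he
      rw [hβval]
      show Function.extend edh (Fin.snoc (Fin.insertNth 0 t w) 1) 0 (edh i.succ)
        = (Fin.snoc w 1 : Fin (k + 1) → ℝ) i
      rw [hinj.extend_apply]
      induction i using Fin.lastCases with
      | last => rw [Fin.succ_last, Fin.snoc_last, Fin.snoc_last]
      | cast j =>
        rw [Fin.succ_castSucc, Fin.snoc_castSucc, Fin.snoc_castSucc,
          ← Fin.zero_succAbove, Fin.insertNth_apply_succAbove]
    have hA : Function.extend edh (Fin.snoc (Fin.insertNth 0 t w) 1) 0 s(u, v) = t := by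
      rw [← h0, hinj.extend_apply,
        show (0 : Fin (k + 2)) = Fin.castSucc 0 from rfl, Fin.snoc_castSucc,
        Fin.insertNth_apply_same]
    rw [psiFun_congr G hB, phiFun_congr G u v hB, hA]
  -- measure-theoretic part
  have hFmeas : Measurable fun z : Fin (k + 1) → ℝ =>
      ENNReal.ofReal ((psiFun Ghat (Function.extend edh (Fin.snoc z 1) 0) ^ 2)⁻¹) := by
    apply ENNReal.measurable_ofReal.comp
    apply Measurable.inv
    apply Measurable.pow_const
    exact (measurable_psiFun Ghat).comp ((measurable_extend hinj).comp measurable_snoc)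
  have hSk : MeasurableSet (Set.univ.pi fun _ : Fin k => Set.Ioi (0 : ℝ)) :=
    MeasurableSet.univ_pi fun _ => measurableSet_Ioi
  set e : (Fin (k + 1) → ℝ) ≃ᵐ ℝ × (Fin k → ℝ) :=
    MeasurableEquiv.piFinSuccAbove (fun _ : Fin (k + 1) => ℝ) 0 with he
  have hmp : MeasurePreserving e.symm
      (volume : Measure (ℝ × (Fin k → ℝ))) (volume : Measure (Fin (k + 1) → ℝ)) :=
    MeasurePreserving.symm _ (volume_preserving_piFinSuccAbove (fun _ : Fin (k + 1) => ℝ) 0)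
  have hesymm : ∀ p : ℝ × (Fin k → ℝ), e.symm p = Fin.insertNth 0 p.1 p.2 := fun p => rfl
  have hpre : e.symm ⁻¹' (Set.univ.pi fun _ : Fin (k + 1) => Set.Ioi (0 : ℝ))
      = Set.Ioi (0 : ℝ) ×ˢ (Set.univ.pi fun _ : Fin k => Set.Ioi (0 : ℝ)) := by
    ext ⟨t, w⟩
    simp only [Set.mem_preimage, Set.mem_pi, Set.mem_univ, forall_true_left, Set.mem_prod,
      hesymm]
    constructor
    · intro h
      refine ⟨?_, fun j => ?_⟩
      · have := h 0
        rwa [Fin.insertNth_apply_same] at this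
      · have := h (Fin.succAbove 0 j)
        rwa [Fin.insertNth_apply_succAbove] at this
    · rintro ⟨h1, h2⟩ j
      induction j using Fin.cases with
      | zero => rw [Fin.insertNth_apply_same]; exact h1
      | succ m =>
        rw [← Fin.zero_succAbove, Fin.insertNth_apply_succAbove]
        exact h2 m
  have hvol : (volume : Measure (ℝ × (Fin k → ℝ)))
      = (volume : Measure ℝ).prod (volume : Measure (Fin k → ℝ)) := rfl
  rw [← hmp.setLIntegral_comp_preimage_emb e.symm.measurableEmbedding, hpre, hvol,
    ← Measure.prod_restrict]
  rw [lintegral_prod_symm (fun p : ℝ × (Fin k → ℝ) => ENNReal.ofReal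
      ((psiFun Ghat (Function.extend edh (Fin.snoc (e.symm p) 1) 0) ^ 2)⁻¹))
    ((hFmeas.comp e.symm.measurable).aemeasurable)]
  refine setLIntegral_congr_fun hSk (fun w hw => ?_)
  have hstep : ∀ t : ℝ,
      ENNReal.ofReal ((psiFun Ghat (Function.extend edh
        (Fin.snoc (e.symm (t, w)) 1) 0) ^ 2)⁻¹)
      = ENNReal.ofReal (((t * av w + bv w) ^ 2)⁻¹) := by
    intro t
    rw [hesymm, key]
  calc
    ∫⁻ t in Set.Ioi (0 : ℝ), ENNReal.ofReal ((psiFun Ghat (Function.extend edh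
        (Fin.snoc (e.symm (t, w)) 1) 0) ^ 2)⁻¹)
      = ∫⁻ t in Set.Ioi (0 : ℝ), ENNReal.ofReal (((t * av w + bv w) ^ 2)⁻¹) :=
        setLIntegral_congr_fun measurableSet_Ioi
          (fun t _ => hstep t)
    _ = ENNReal.ofReal ((av w * bv w)⁻¹) := inner_integral (hapos w hw) (hbpos w hw)
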